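/- arXiv:2311.13137 — 2 statements merged into one kernel-verified Lean document; each statement's English description precedes it below -/
import Mathlib

section
/- Let p ≥ 2 and 0 < γ < 2 − 2/p. For every M ∈ ℝ^{n×p} all of whose columns M_{·i} are nonzero, letting D = diag(γ‖M_{·1}‖^{−2}, …, γ‖M_{·p}‖^{−2}), the operator norm of D^{1/2} MᵀM D^{1/2} is strictly less than 2(p−1), and consequently the p×p symmetric matrix −2(p−1) D + D MᵀM D is negative definite. -/
open MeasureTheory Matrix Filter Topology Asymptotics

noncomputable section

namespace DoubleShrinkage

instance (n p : ℕ) : MeasureSpace (Matrix (Fin n) (Fin p) ℝ) :=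
  inferInstanceAs (MeasureSpace (Fin n → Fin p → ℝ))

instance (n p : ℕ) : NormedAddCommGroup (Matrix (Fin n) (Fin p) ℝ) :=
  inferInstanceAs (NormedAddCommGroup (Fin n → Fin p → ℝ))

instance (n p : ℕ) : NormedSpace ℝ (Matrix (Fin n) (Fin p) ℝ) :=
  inferInstanceAs (NormedSpace ℝ (Fin n → Fin p → ℝ))

instance (n p : ℕ) : BorelSpace (Matrix (Fin n) (Fin p) ℝ) :=
  inferInstanceAs (BorelSpace (Fin n → Fin p → ℝ))

/-- Squared Frobenius norm. -/
def frobSq {n p : ℕ} (M : Matrix (Fin n) (Fin p) ℝ) : ℝ := ∑ a, ∑ i, (M a i) ^ 2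

/-- Frobenius norm. -/
def frobNorm {n p : ℕ} (M : Matrix (Fin n) (Fin p) ℝ) : ℝ := Real.sqrt (frobSq M)

/-- Density of the matrix normal distribution `N_{n,p}(M, I_n, N⁻¹ I_p)` at `Y`. -/
def gaussD (n p N : ℕ) (M Y : Matrix (Fin n) (Fin p) ℝ) : ℝ :=
  ((N : ℝ) / (2 * Real.pi)) ^ (((n : ℝ) * p) / 2) * Real.exp (-(N : ℝ) * frobSq (Y - M) / 2)

/-- Standard Gaussian density on `ℝ^{n×p}`. -/
def stdGauss (n p : ℕ) (Z : Matrix (Fin n) (Fin p) ℝ) : ℝ :=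
  (2 * Real.pi) ^ (-((n : ℝ) * p) / 2) * Real.exp (-frobSq Z / 2)

/-- Singular value shrinkage prior. -/
def piSVS (n p : ℕ) (M : Matrix (Fin n) (Fin p) ℝ) : ℝ :=
  (Mᵀ * M).det ^ (-((n : ℝ) - p - 1) / 2)

/-- Singular value shrinkage prior with additional scalar shrinkage. -/
def piMSVS1 (n p : ℕ) (γ : ℝ) (M : Matrix (Fin n) (Fin p) ℝ) : ℝ :=
  piSVS n p M * frobNorm M ^ (-γ)

/-- Squared Euclidean norm of the i-th column. -/
def colNormSq {n p : ℕ} (M : Matrix (Fin n) (Fin p) ℝ) (i : Fin p) : ℝ := ∑ a, (M a i) ^ 2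

/-- Singular value shrinkage prior with additional column-wise shrinkage. -/
def piMSVS2 (n p : ℕ) (γ : Fin p → ℝ) (M : Matrix (Fin n) (Fin p) ℝ) : ℝ :=
  piSVS n p M * ∏ i, Real.sqrt (colNormSq M i) ^ (-γ i)

/-- Generalized Bayes estimator with respect to a prior density `π`. -/
def gBayes (n p N : ℕ) (π : Matrix (Fin n) (Fin p) ℝ → ℝ) (Y : Matrix (Fin n) (Fin p) ℝ) :
    Matrix (Fin n) (Fin p) ℝ :=
  (∫ M, gaussD n p N M Y * π M)⁻¹ • ∫ M, (gaussD n p N M Y * π M) • M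

/-- Frobenius risk of an estimator at `M`. -/
def frobRisk (n p N : ℕ) (Mhat : Matrix (Fin n) (Fin p) ℝ → Matrix (Fin n) (Fin p) ℝ)
    (M : Matrix (Fin n) (Fin p) ℝ) : ℝ :=
  ∫ Y, gaussD n p N M Y * frobSq (Mhat Y - M)

/-- Matrix quadratic risk of an estimator at `M`. -/
def matRisk (n p N : ℕ) (Mhat : Matrix (Fin n) (Fin p) ℝ → Matrix (Fin n) (Fin p) ℝ)
    (M : Matrix (Fin n) (Fin p) ℝ) : Matrix (Fin p) (Fin p) ℝ :=
  ∫ Y, gaussD n p N M Y • ((Mhat Y - M)ᵀ * (Mhat Y - M))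

/-- Laplacian of `f : ℝ^{n×p} → ℝ`: sum of all second partial derivatives. -/
def matLap {n p : ℕ} (f : Matrix (Fin n) (Fin p) ℝ → ℝ) (M : Matrix (Fin n) (Fin p) ℝ) : ℝ :=
  ∑ a, ∑ i, iteratedFDeriv ℝ 2 f M ![Matrix.single a i (1 : ℝ),
    Matrix.single a i (1 : ℝ)]

/-- Bayesian predictive density based on a prior density `π`. -/
def predD (n p N : ℕ) (π : Matrix (Fin n) (Fin p) ℝ → ℝ)
    (Y Yt : Matrix (Fin n) (Fin p) ℝ) : ℝ :=
  (∫ M, gaussD n p N M Y * π M)⁻¹ * ∫ M, gaussD n p 1 M Yt * (gaussD n p N M Y * π M)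

/-- Kullback–Leibler risk of the Bayesian predictive density based on `π` at `M`. -/
def klRisk (n p N : ℕ) (π : Matrix (Fin n) (Fin p) ℝ → ℝ)
    (M : Matrix (Fin n) (Fin p) ℝ) : ℝ :=
  ∫ Y, gaussD n p N M Y *
    ∫ Yt, gaussD n p 1 M Yt * Real.log (gaussD n p 1 M Yt / predD n p N π Y Yt)


/-- The ℓ²-operator norm of a square matrix. -/
def l2OpNorm {p : ℕ} (A : Matrix (Fin p) (Fin p) ℝ) : ℝ :=
  ‖LinearMap.toContinuousLinearMap (Matrix.toEuclideanLin A)‖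

lemma aux_colNormSq_pos {n p : ℕ} (M : Matrix (Fin n) (Fin p) ℝ) (i : Fin p)
    (h : (fun a => M a i) ≠ 0) : 0 < colNormSq M i := by
  have hnn : ∀ a ∈ Finset.univ, (0:ℝ) ≤ (M a i) ^ 2 := fun a _ => sq_nonneg _
  rcases (Finset.sum_nonneg hnn).lt_or_eq with h' | h'
  · exact h'
  · exfalso
    apply h
    funext a
    have := (Finset.sum_eq_zero_iff_of_nonneg hnn).mp h'.symm a (Finset.mem_univ a)
    simpa using pow_eq_zero_iff (n := 2) (by norm_num) |>.mp this

lemma aux_mulVec_sq_sum_le {m k : ℕ} (B : Matrix (Fin m) (Fin k) ℝ) (x : Fin k → ℝ) :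
    ∑ j, (B *ᵥ x) j ^ 2 ≤ (∑ j, ∑ i, B j i ^ 2) * ∑ i, x i ^ 2 := by
  rw [Finset.sum_mul]
  refine Finset.sum_le_sum fun j _ => ?_
  simpa [Matrix.mulVec, dotProduct] using
    Finset.sum_mul_sq_le_sq_mul_sq Finset.univ (fun i => B j i) x

/-- ‖D^{1/2} MᵀM D^{1/2}‖ < 2(p−1) and −2(p−1) D + D MᵀM D is
negative definite, for D = diag(γ‖M_{·i}‖^{−2}). -/
theorem stmt13 (n p : ℕ) (hp : 2 ≤ p) (γ : ℝ) (hγ0 : 0 < γ) (hγ : γ < 2 - 2 / (p : ℝ))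
    (M : Matrix (Fin n) (Fin p) ℝ) (hM : ∀ i, (fun a => M a i) ≠ 0) :
    l2OpNorm (Matrix.diagonal (fun i => Real.sqrt (γ * (colNormSq M i)⁻¹)) * (Mᵀ * M) *
        Matrix.diagonal (fun i => Real.sqrt (γ * (colNormSq M i)⁻¹))) <
      2 * ((p : ℝ) - 1) ∧
    ∀ x : Fin p → ℝ, x ≠ 0 →
      x ⬝ᵥ ((-(2 * ((p : ℝ) - 1))) • Matrix.diagonal (fun i => γ * (colNormSq M i)⁻¹) +
        Matrix.diagonal (fun i => γ * (colNormSq M i)⁻¹) * (Mᵀ * M) *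
          Matrix.diagonal (fun i => γ * (colNormSq M i)⁻¹)) *ᵥ x < 0 := by
  set d : Fin p → ℝ := fun i => γ * (colNormSq M i)⁻¹ with hd_def
  set ds : Fin p → ℝ := fun i => Real.sqrt (d i) with hds_def
  have hcpos : ∀ i, 0 < colNormSq M i := fun i => aux_colNormSq_pos M i (hM i)
  have hdpos : ∀ i, 0 < d i := fun i => mul_pos hγ0 (inv_pos.mpr (hcpos i))
  have hds_sq : ∀ i, ds i ^ 2 = d i := fun i => Real.sq_sqrt (hdpos i).le
  set B : Matrix (Fin n) (Fin p) ℝ := M * Matrix.diagonal ds with hB_def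
  set A : Matrix (Fin p) (Fin p) ℝ :=
    Matrix.diagonal ds * (Mᵀ * M) * Matrix.diagonal ds with hA_def
  have hA : A = Bᵀ * B := by
    rw [hB_def, Matrix.transpose_mul, Matrix.diagonal_transpose]
    simp only [hA_def, Matrix.mul_assoc]
  -- Frobenius norm squared of B is p * γ
  have hF : (∑ j, ∑ i, B j i ^ 2) = (p : ℝ) * γ := by
    rw [Finset.sum_comm]
    have : ∀ i : Fin p, (∑ j, B j i ^ 2) = γ := by
      intro i
      have : ∀ j, B j i = M j i * ds i := fun j => by
        simp [hB_def, Matrix.mul_diagonal]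
      simp_rw [this, mul_pow, ← Finset.sum_mul, hds_sq]
      have hc := (hcpos i).ne'
      have hsum : (∑ j, M j i ^ 2) = colNormSq M i := rfl
      rw [hsum, hd_def]
      field_simp
    simp [this, Finset.sum_const, Finset.card_univ, mul_comm]
  have hFT : (∑ i, ∑ j, Bᵀ i j ^ 2) = (p : ℝ) * γ := by
    rw [Finset.sum_comm]; simpa [Matrix.transpose_apply] using hF
  have hpγ_nn : 0 ≤ (p : ℝ) * γ := by positivity
  -- key mulVec bound for A
  have hAx : ∀ x : Fin p → ℝ,
      ∑ j, (A *ᵥ x) j ^ 2 ≤ ((p : ℝ) * γ) ^ 2 * ∑ i, x i ^ 2 := by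
    intro x
    have h1 := aux_mulVec_sq_sum_le B x
    have h2 := aux_mulVec_sq_sum_le Bᵀ (B *ᵥ x)
    rw [hF] at h1
    rw [hFT] at h2
    have : A *ᵥ x = Bᵀ *ᵥ (B *ᵥ x) := by rw [hA, ← Matrix.mulVec_mulVec]
    rw [this]
    calc ∑ j, (Bᵀ *ᵥ (B *ᵥ x)) j ^ 2 ≤ (p : ℝ) * γ * ∑ j, (B *ᵥ x) j ^ 2 := h2
      _ ≤ (p : ℝ) * γ * ((p : ℝ) * γ * ∑ i, x i ^ 2) := by
          exact mul_le_mul_of_nonneg_left h1 hpγ_nn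
      _ = ((p : ℝ) * γ) ^ 2 * ∑ i, x i ^ 2 := by ring
  -- p * γ < 2 * (p - 1)
  have hp2 : (2 : ℝ) ≤ (p : ℝ) := by exact_mod_cast hp
  have hp0 : (0 : ℝ) < (p : ℝ) := by linarith
  have hpγ : (p : ℝ) * γ < 2 * ((p : ℝ) - 1) := by
    have h2p : (p : ℝ) * (2 / (p : ℝ)) = 2 := by field_simp
    nlinarith [mul_lt_mul_of_pos_left hγ hp0]
  constructor
  · -- operator norm bound
    have hle : l2OpNorm A ≤ (p : ℝ) * γ := by
      rw [l2OpNorm]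
      refine ContinuousLinearMap.opNorm_le_bound _ hpγ_nn fun x => ?_
      rw [LinearMap.coe_toContinuousLinearMap']
      have hx : Matrix.toEuclideanLin A x =
          (WithLp.equiv 2 (Fin p → ℝ)).symm (A *ᵥ (WithLp.equiv 2 (Fin p → ℝ)) x) := rfl
      rw [hx, EuclideanSpace.norm_eq, EuclideanSpace.norm_eq]
      set x' : Fin p → ℝ := (WithLp.equiv 2 (Fin p → ℝ)) x with hx'
      have h1 : ∀ i, ‖((WithLp.equiv 2 (Fin p → ℝ)).symm (A *ᵥ x')) i‖ ^ 2
          = (A *ᵥ x') i ^ 2 := fun i => by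
        rw [Real.norm_eq_abs, sq_abs]; rfl
      have h2 : ∀ i, ‖x i‖ ^ 2 = x' i ^ 2 := fun i => by
        rw [Real.norm_eq_abs, sq_abs]; rfl
      simp_rw [h1, h2]
      rw [← Real.sqrt_sq hpγ_nn, ← Real.sqrt_mul (sq_nonneg _)]
      exact Real.sqrt_le_sqrt (hAx x')
    exact lt_of_le_of_lt hle hpγ
  · -- negative definiteness
    intro x hx
    set c : ℝ := 2 * ((p : ℝ) - 1) with hc_def
    set y : Fin p → ℝ := fun i => ds i * x i with hy_def
    have hDsplit : (Matrix.diagonal d : Matrix (Fin p) (Fin p) ℝ)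
        = Matrix.diagonal ds * Matrix.diagonal ds := by
      rw [Matrix.diagonal_mul_diagonal]
      have : (fun i => ds i * ds i) = d :=
        funext fun i => Real.mul_self_sqrt (hdpos i).le
      rw [this]
    have hsand : Matrix.diagonal d * (Mᵀ * M) * Matrix.diagonal d
        = Matrix.diagonal ds * A * Matrix.diagonal ds := by
      rw [hDsplit, hA_def]
      simp only [Matrix.mul_assoc]
    -- split the dot product
    rw [Matrix.add_mulVec, dotProduct_add]
    have hterm1 : x ⬝ᵥ ((-c) • Matrix.diagonal d) *ᵥ x
        = -c * ∑ i, d i * x i ^ 2 := by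
      rw [Matrix.smul_mulVec, dotProduct_smul]
      simp only [smul_eq_mul]
      congr 1
      simp only [dotProduct, Matrix.mulVec_diagonal]
      exact Finset.sum_congr rfl fun i _ => by ring
    have hterm2 : x ⬝ᵥ (Matrix.diagonal d * (Mᵀ * M) * Matrix.diagonal d) *ᵥ x
        = y ⬝ᵥ (A *ᵥ y) := by
      have hDx : Matrix.diagonal ds *ᵥ x = y :=
        funext fun i => by simp [Matrix.mulVec_diagonal, hy_def]
      have hxD : Matrix.vecMul x (Matrix.diagonal ds) = y :=
        funext fun i => by simp [Matrix.vecMul_diagonal, hy_def, mul_comm]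
      have hmv : (Matrix.diagonal ds * A * Matrix.diagonal ds) *ᵥ x
          = Matrix.diagonal ds *ᵥ (A *ᵥ (Matrix.diagonal ds *ᵥ x)) := by
        rw [Matrix.mulVec_mulVec, Matrix.mulVec_mulVec]
      rw [hsand, hmv, hDx, Matrix.dotProduct_mulVec, hxD]
    rw [hterm1, hterm2]
    -- bound y ⬝ᵥ (A *ᵥ y)
    have hyy : (∑ i, y i ^ 2) = ∑ i, d i * x i ^ 2 := by
      refine Finset.sum_congr rfl fun i _ => ?_
      rw [hy_def]; rw [mul_pow, hds_sq i]
    have hbound : y ⬝ᵥ (A *ᵥ y) ≤ (p : ℝ) * γ * ∑ i, y i ^ 2 := by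
      have hcs := Finset.sum_mul_sq_le_sq_mul_sq Finset.univ y (A *ᵥ y)
      have hAy := hAx y
      have hynn : (0:ℝ) ≤ ∑ i, y i ^ 2 := Finset.sum_nonneg fun i _ => sq_nonneg _
      have h1 : (y ⬝ᵥ (A *ᵥ y)) ^ 2 ≤ ((p : ℝ) * γ * ∑ i, y i ^ 2) ^ 2 := by
        calc (y ⬝ᵥ (A *ᵥ y)) ^ 2 ≤ (∑ i, y i ^ 2) * ∑ i, (A *ᵥ y) i ^ 2 := hcs
          _ ≤ (∑ i, y i ^ 2) * (((p : ℝ) * γ) ^ 2 * ∑ i, y i ^ 2) :=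
              mul_le_mul_of_nonneg_left hAy hynn
          _ = ((p : ℝ) * γ * ∑ i, y i ^ 2) ^ 2 := by ring
      have h2 : (0:ℝ) ≤ (p : ℝ) * γ * ∑ i, y i ^ 2 := mul_nonneg hpγ_nn hynn
      nlinarith [le_abs_self (y ⬝ᵥ (A *ᵥ y)), abs_nonneg (y ⬝ᵥ (A *ᵥ y)),
        sq_abs (y ⬝ᵥ (A *ᵥ y))]
    have hS_pos : 0 < ∑ i, d i * x i ^ 2 := by
      obtain ⟨i, hi⟩ : ∃ i, x i ≠ 0 := by
        by_contra h
        push_neg at h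
        exact hx (funext h)
      refine Finset.sum_pos' (fun j _ => mul_nonneg (hdpos j).le (sq_nonneg _)) ⟨i,
        Finset.mem_univ i, mul_pos (hdpos i) (pow_pos (abs_pos.mpr hi) 2 |>.trans_le (by rw [sq_abs]))⟩
    have : y ⬝ᵥ (A *ᵥ y) ≤ (p : ℝ) * γ * ∑ i, d i * x i ^ 2 := by rwa [hyy] at hbound
    nlinarith

end DoubleShrinkage
end
end

section
/- Let n ≥ p + 2 and γ ≥ 0, with γ_1 = ⋯ = γ_p = γ. At every M ∈ ℝ^{n×p} with det(MᵀM) > 0, the Laplacian of π_MSVS2 (the sum over all np entries of M of second partial derivatives) satisfies Δπ_MSVS2(M) = γ(γ + n − 2p) (Σ_{i=1}^p ‖M_{·i}‖^{−2}) π_MSVS2(M). In particular, if γ(γ + n − 2p) ≤ 0 then π_MSVS2 is superharmonic on {M : det(MᵀM) > 0}. -/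
open MeasureTheory Matrix Filter Topology Asymptotics

noncomputable section

namespace DoubleShrinkage

/-- coordinate CLM -/
def mCoord {m k : ℕ} (a : Fin m) (i : Fin k) : Matrix (Fin m) (Fin k) ℝ →L[ℝ] ℝ :=
  (ContinuousLinearMap.proj i).comp
    (ContinuousLinearMap.proj (R := ℝ) (φ := fun _ : Fin m => Fin k → ℝ) a)

@[simp] lemma mCoord_apply {m k : ℕ} (a : Fin m) (i : Fin k) (E : Matrix (Fin m) (Fin k) ℝ) :
    mCoord a i E = E a i := rfl

lemma hasFDerivAt_coord {m k : ℕ} (a : Fin m) (i : Fin k) (x : Matrix (Fin m) (Fin k) ℝ) :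
    HasFDerivAt (fun y : Matrix (Fin m) (Fin k) ℝ => y a i) (mCoord a i) x :=
  (mCoord a i).hasFDerivAt

/-- derivative of det -/
def detL {p : ℕ} (A : Matrix (Fin p) (Fin p) ℝ) : Matrix (Fin p) (Fin p) ℝ →L[ℝ] ℝ :=
  ∑ i, ∑ j, A.adjugate j i • mCoord i j

lemma detL_apply {p : ℕ} (A H : Matrix (Fin p) (Fin p) ℝ) :
    detL A H = ∑ i, ∑ j, A.adjugate j i * H i j := by
  simp [detL, ContinuousLinearMap.sum_apply]

lemma hasFDerivAt_det {p : ℕ} (A : Matrix (Fin p) (Fin p) ℝ) :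
    HasFDerivAt Matrix.det (detL A) A := by
  have h : HasFDerivAt (fun B : Matrix (Fin p) (Fin p) ℝ =>
      ∑ σ : Equiv.Perm (Fin p), ((Equiv.Perm.sign σ : ℤ) : ℝ) * ∏ i, B (σ i) i)
      (∑ σ : Equiv.Perm (Fin p), ((Equiv.Perm.sign σ : ℤ) : ℝ) •
        (∑ i : Fin p, (∏ j ∈ Finset.univ.erase i, A (σ j) j) • mCoord (σ i) i)) A :=
    HasFDerivAt.fun_sum fun σ _ =>
      (HasFDerivAt.finset_prod fun i _ => hasFDerivAt_coord (σ i) i A).const_mul _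
  have hfun : (fun B : Matrix (Fin p) (Fin p) ℝ =>
      ∑ σ : Equiv.Perm (Fin p), ((Equiv.Perm.sign σ : ℤ) : ℝ) * ∏ i, B (σ i) i) = Matrix.det := by
    funext B; rw [Matrix.det_apply']
  rw [hfun] at h
  convert h using 1
  ext H
  rw [detL_apply]
  simp only [ContinuousLinearMap.coe_sum', Finset.sum_apply, ContinuousLinearMap.coe_smul',
    Pi.smul_apply, mCoord_apply, smul_eq_mul]
  have key : ∀ i : Fin p, (Matrix.updateCol A i fun r => H r i).det
      = ∑ σ : Equiv.Perm (Fin p), ((Equiv.Perm.sign σ : ℤ) : ℝ) *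
          ((∏ j ∈ Finset.univ.erase i, A (σ j) j) * H (σ i) i) := by
    intro i
    rw [Matrix.det_apply']
    refine Finset.sum_congr rfl fun σ _ => ?_
    congr 1
    rw [← Finset.mul_prod_erase (Finset.univ) _ (Finset.mem_univ i)]
    rw [Matrix.updateCol_apply, if_pos rfl]
    rw [mul_comm]
    congr 1
    refine Finset.prod_congr rfl fun j hj => ?_
    rw [Matrix.updateCol_apply, if_neg (Finset.ne_of_mem_erase hj)]
  calc ∑ i, ∑ j, A.adjugate j i * H i j
      = ∑ j, ∑ i, A.adjugate j i * H i j := Finset.sum_comm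
    _ = ∑ i : Fin p, (Matrix.updateCol A i fun r => H r i).det := by
        refine Finset.sum_congr rfl fun i _ => ?_
        rw [← Matrix.cramer_apply, Matrix.cramer_eq_adjugate_mulVec, Matrix.mulVec]
        simp [dotProduct]
    _ = ∑ σ : Equiv.Perm (Fin p), ((Equiv.Perm.sign σ : ℤ) : ℝ) *
          ∑ i : Fin p, (∏ j ∈ Finset.univ.erase i, A (σ j) j) * H (σ i) i := by
        simp_rw [key]
        rw [Finset.sum_comm]
        exact Finset.sum_congr rfl fun σ _ => (Finset.mul_sum _ _ _).symm
    _ = _ := by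
        refine Finset.sum_congr rfl fun σ _ => ?_
        rw [Finset.mul_sum]

variable {n p : ℕ}

def Sfun (x : Matrix (Fin n) (Fin p) ℝ) : Matrix (Fin p) (Fin p) ℝ := xᵀ * x

lemma Sfun_apply (x : Matrix (Fin n) (Fin p) ℝ) (i j : Fin p) :
    Sfun x i j = ∑ a, x a i * x a j := by
  simp [Sfun, Matrix.mul_apply]

lemma Sfun_symm (x : Matrix (Fin n) (Fin p) ℝ) (i j : Fin p) : Sfun x i j = Sfun x j i := by
  simp [Sfun_apply, mul_comm]

lemma adj_symm (x : Matrix (Fin n) (Fin p) ℝ) (i j : Fin p) :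
    (Sfun x).adjugate i j = (Sfun x).adjugate j i := by
  have h : (Sfun x)ᵀ = Sfun x := by
    ext i j; simp [Matrix.transpose_apply]; exact (Sfun_symm x j i)
  conv_lhs => rw [← h, ← Matrix.adjugate_transpose]
  rfl

/-- entrywise derivative of Sfun -/
def SLe (x : Matrix (Fin n) (Fin p) ℝ) (i j : Fin p) : Matrix (Fin n) (Fin p) ℝ →L[ℝ] ℝ :=
  ∑ a, (x a i • mCoord a j + x a j • mCoord a i)

lemma SLe_apply (x E : Matrix (Fin n) (Fin p) ℝ) (i j : Fin p) :
    SLe x i j E = ∑ a, (x a i * E a j + x a j * E a i) := by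
  simp [SLe, ContinuousLinearMap.sum_apply]

def SL (x : Matrix (Fin n) (Fin p) ℝ) : Matrix (Fin n) (Fin p) ℝ →L[ℝ] Matrix (Fin p) (Fin p) ℝ :=
  ContinuousLinearMap.pi fun i => ContinuousLinearMap.pi fun j => SLe x i j

lemma hasFDerivAt_Sfun (x : Matrix (Fin n) (Fin p) ℝ) : HasFDerivAt Sfun (SL x) x := by
  refine hasFDerivAt_pi'.2 ?_
  intro i
  rw [show (ContinuousLinearMap.proj i).comp (SL x) = ContinuousLinearMap.pi fun j => SLe x i j from
    ContinuousLinearMap.proj_pi _ i]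
  refine hasFDerivAt_pi'.2 ?_
  intro j
  rw [ContinuousLinearMap.proj_pi]
  have h : HasFDerivAt (fun y : Matrix (Fin n) (Fin p) ℝ => ∑ a, y a i * y a j) (SLe x i j) x :=
    HasFDerivAt.fun_sum fun a _ => (hasFDerivAt_coord a i x).mul (hasFDerivAt_coord a j x)
  have hfun : (fun y : Matrix (Fin n) (Fin p) ℝ => ∑ a, y a i * y a j)
      = fun y => Sfun y i j := by
    funext y; rw [Sfun_apply]
  rwa [hfun] at h

def Dfun (x : Matrix (Fin n) (Fin p) ℝ) : ℝ := (Sfun x).det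

def DL (x : Matrix (Fin n) (Fin p) ℝ) : Matrix (Fin n) (Fin p) ℝ →L[ℝ] ℝ :=
  (detL (Sfun x)).comp (SL x)

lemma hasFDerivAt_Dfun (x : Matrix (Fin n) (Fin p) ℝ) : HasFDerivAt Dfun (DL x) x :=
  (hasFDerivAt_det (Sfun x)).comp x (hasFDerivAt_Sfun x)

lemma SL_apply (x E : Matrix (Fin n) (Fin p) ℝ) (i j : Fin p) : SL x E i j = SLe x i j E := rfl

lemma DL_apply (x E : Matrix (Fin n) (Fin p) ℝ) :
    DL x E = ∑ a, ∑ i, 2 * (x * (Sfun x).adjugate) a i * E a i := by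
  have : DL x E = ∑ i, ∑ j, (Sfun x).adjugate j i * SLe x i j E := by
    rw [DL, ContinuousLinearMap.comp_apply, detL_apply]
    rfl
  rw [this]
  simp_rw [SLe_apply, Finset.mul_sum, mul_add, Matrix.mul_apply]
  set adj := (Sfun x).adjugate with hadj
  have hT2 : ∀ c : Fin p → Fin p → ℝ, (∀ i j, c i j = adj i j) →
      ∑ i : Fin p, ∑ j : Fin p, ∑ a : Fin n, c j i * (x a j * E a i)
        = ∑ a, ∑ i, (∑ j, x a j * adj j i) * E a i := by
    intro c hc
    have h1 : ∀ i : Fin p, ∑ j : Fin p, ∑ a : Fin n, c j i * (x a j * E a i)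
        = ∑ a : Fin n, (∑ j, x a j * adj j i) * E a i := by
      intro i
      rw [Finset.sum_comm]
      refine Finset.sum_congr rfl fun a _ => ?_
      rw [Finset.sum_mul]
      refine Finset.sum_congr rfl fun j _ => ?_
      rw [hc]; ring
    rw [Finset.sum_congr rfl fun i _ => h1 i, Finset.sum_comm]
  have hA : ∑ i : Fin p, ∑ j : Fin p, ∑ a : Fin n, adj j i * (x a i * E a j)
      = ∑ a, ∑ i, (∑ j, x a j * adj j i) * E a i := by
    rw [Finset.sum_comm]
    exact hT2 (fun j i => adj i j) (fun i j => adj_symm x j i)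
  have hB := hT2 adj (fun _ _ => rfl)
  simp_rw [Finset.sum_add_distrib]
  rw [hA, hB, ← Finset.sum_add_distrib]
  refine Finset.sum_congr rfl fun a _ => ?_
  rw [← Finset.sum_add_distrib]
  refine Finset.sum_congr rfl fun i _ => by ring




/-- derivative of the column norm squared -/
def sL (x : Matrix (Fin n) (Fin p) ℝ) (i : Fin p) : Matrix (Fin n) (Fin p) ℝ →L[ℝ] ℝ :=
  ∑ a, (2 * x a i) • mCoord a i

lemma sL_apply (x E : Matrix (Fin n) (Fin p) ℝ) (i : Fin p) :
    sL x i E = ∑ a, 2 * x a i * E a i := by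
  simp [sL, ContinuousLinearMap.sum_apply]

lemma hasFDerivAt_col (x : Matrix (Fin n) (Fin p) ℝ) (i : Fin p) :
    HasFDerivAt (fun y => colNormSq y i) (sL x i) x := by
  have h : HasFDerivAt (fun y : Matrix (Fin n) (Fin p) ℝ => ∑ a, y a i * y a i)
      (∑ a, (x a i • mCoord a i + x a i • mCoord a i)) x :=
    HasFDerivAt.fun_sum fun a _ => (hasFDerivAt_coord a i x).mul (hasFDerivAt_coord a i x)
  have hfun : (fun y : Matrix (Fin n) (Fin p) ℝ => ∑ a, y a i * y a i)
      = fun y => colNormSq y i := by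
    funext y; simp [colNormSq, pow_two]
  rw [hfun] at h
  convert h using 1
  refine Finset.sum_congr rfl fun a _ => ?_
  rw [two_mul, add_smul]

lemma colNormSq_nonneg (x : Matrix (Fin n) (Fin p) ℝ) (i : Fin p) : 0 ≤ colNormSq x i :=
  Finset.sum_nonneg fun a _ => sq_nonneg _

lemma colNormSq_pos (x : Matrix (Fin n) (Fin p) ℝ) (hdet : Dfun x ≠ 0) (i : Fin p) :
    0 < colNormSq x i := by
  rcases (colNormSq_nonneg x i).lt_or_eq with h | h
  · exact h
  exfalso
  apply hdet
  have hz : ∀ a, x a i = 0 := by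
    intro a
    have := (Finset.sum_eq_zero_iff_of_nonneg (fun a _ => sq_nonneg (x a i))).1 h.symm a
      (Finset.mem_univ a)
    exact pow_eq_zero_iff (two_ne_zero) |>.1 this
  exact Matrix.det_eq_zero_of_row_eq_zero i fun j => by simp [Sfun_apply, hz]

lemma hasFDerivAt_Sfun_entry (x : Matrix (Fin n) (Fin p) ℝ) (i j : Fin p) :
    HasFDerivAt (fun y => Sfun y i j) (SLe x i j) x := by
  have h1 := hasFDerivAt_pi'.1 (hasFDerivAt_Sfun x) i
  have h2 := hasFDerivAt_pi'.1 h1 j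
  have hL : (ContinuousLinearMap.proj j).comp
      ((ContinuousLinearMap.proj i).comp (SL x)) = SLe x i j := by
    ext E; rfl
  rwa [hL] at h2

lemma diffAt_Sfun_entry (x : Matrix (Fin n) (Fin p) ℝ) (i j : Fin p) :
    DifferentiableAt ℝ (fun y => Sfun y i j) x :=
  (hasFDerivAt_Sfun_entry x i j).differentiableAt

lemma diffAt_adj (x : Matrix (Fin n) (Fin p) ℝ) (j i : Fin p) :
    DifferentiableAt ℝ (fun y => (Sfun y).adjugate j i) x := by
  have hfun : (fun y : Matrix (Fin n) (Fin p) ℝ => (Sfun y).adjugate j i)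
      = fun y => ((Sfun y).updateRow i (Pi.single j 1)).det := by
    funext y; rw [Matrix.adjugate_apply]
  rw [hfun]
  have houter := (hasFDerivAt_det (((Sfun x)).updateRow i (Pi.single j 1))).differentiableAt
  have hinner : DifferentiableAt ℝ
      (fun y : Matrix (Fin n) (Fin p) ℝ => (Sfun y).updateRow i (Pi.single j 1)) x := by
    refine differentiableAt_pi.2 ?_
    intro r
    refine differentiableAt_pi.2 ?_
    intro c
    have : (fun y : Matrix (Fin n) (Fin p) ℝ => (Sfun y).updateRow i (Pi.single j 1) r c)
        = fun y : Matrix (Fin n) (Fin p) ℝ =>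
            if r = i then (Pi.single j 1 : Fin p → ℝ) c else Sfun y r c := by
      funext y; rw [Matrix.updateRow_apply]
    rw [this]
    split_ifs
    · exact differentiableAt_const _
    · exact diffAt_Sfun_entry x r c
  exact houter.comp x hinner

def Kfun (x : Matrix (Fin n) (Fin p) ℝ) : Matrix (Fin n) (Fin p) ℝ := x * (Sfun x)⁻¹

lemma Kfun_apply (x : Matrix (Fin n) (Fin p) ℝ) (a : Fin n) (i : Fin p) :
    Kfun x a i = (Dfun x)⁻¹ * ∑ j, x a j * (Sfun x).adjugate j i := by
  rw [Kfun, Matrix.inv_def, Ring.inverse_eq_inv, Matrix.mul_smul, Matrix.smul_apply,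
    Matrix.mul_apply, smul_eq_mul]
  rfl

lemma diffAt_Kfun (x : Matrix (Fin n) (Fin p) ℝ) (hdet : Dfun x ≠ 0) (a : Fin n) (i : Fin p) :
    DifferentiableAt ℝ (fun y => Kfun y a i) x := by
  have hfun : (fun y : Matrix (Fin n) (Fin p) ℝ => Kfun y a i)
      = fun y => (Dfun y)⁻¹ * ∑ j, y a j * (Sfun y).adjugate j i := by
    funext y; rw [Kfun_apply]
  rw [hfun]
  exact ((hasFDerivAt_Dfun x).differentiableAt.inv hdet).mul <|
    DifferentiableAt.fun_sum fun j _ =>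
      ((hasFDerivAt_coord a j x).differentiableAt).mul (diffAt_adj x j i)



def cExp (n p : ℕ) : ℝ := ((n : ℝ) - p - 1) / 2

def Ffun (γ : ℝ) (x : Matrix (Fin n) (Fin p) ℝ) : ℝ :=
  Real.exp ((-(cExp n p)) * Real.log (Dfun x) - γ / 2 * ∑ i, Real.log (colNormSq x i))

def hcoef (γ : ℝ) (x : Matrix (Fin n) (Fin p) ℝ) (a : Fin n) (i : Fin p) : ℝ :=
  (-(2 * cExp n p)) * Kfun x a i - γ * (x a i * (colNormSq x i)⁻¹)

def gfun (γ : ℝ) (x : Matrix (Fin n) (Fin p) ℝ) (a : Fin n) (i : Fin p) : ℝ :=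
  Ffun γ x * hcoef γ x a i

lemma piMSVS2_eq (γ : ℝ) (x : Matrix (Fin n) (Fin p) ℝ) (hdet : 0 < Dfun x) :
    piMSVS2 n p (fun _ => γ) x = Ffun γ x := by
  have hs : ∀ i, 0 < colNormSq x i := colNormSq_pos x hdet.ne'
  have h1 : piSVS n p x = Real.exp (Real.log (Dfun x) * (-((n : ℝ) - p - 1) / 2)) := by
    rw [piSVS, Real.rpow_def_of_pos (show (0:ℝ) < (xᵀ * x).det from hdet)]; rfl
  have h2 : ∀ i : Fin p, Real.sqrt (colNormSq x i) ^ (-γ)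
      = Real.exp (Real.log (colNormSq x i) / 2 * (-γ)) := by
    intro i
    rw [Real.rpow_def_of_pos (Real.sqrt_pos.2 (hs i)), Real.log_sqrt (hs i).le]
  rw [piMSVS2, h1, Finset.prod_congr rfl fun i _ => h2 i, ← Real.exp_sum, ← Real.exp_add]
  rw [Ffun]
  congr 1
  rw [← Finset.sum_mul, ← Finset.sum_div, cExp]
  ring

lemma hasFDerivAt_F (γ : ℝ) (x : Matrix (Fin n) (Fin p) ℝ) (hdet : 0 < Dfun x) :
    HasFDerivAt (Ffun γ) (∑ a, ∑ i, gfun γ x a i • mCoord a i) x := by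
  have hs : ∀ i, 0 < colNormSq x i := colNormSq_pos x hdet.ne'
  have hφ : HasFDerivAt
      (fun y : Matrix (Fin n) (Fin p) ℝ =>
        (-(cExp n p)) * Real.log (Dfun y) - γ / 2 * ∑ i, Real.log (colNormSq y i))
      ((-(cExp n p)) • ((Dfun x)⁻¹ • DL x) -
        (γ / 2) • (∑ i, (colNormSq x i)⁻¹ • sL x i)) x :=
    (((hasFDerivAt_Dfun x).log hdet.ne').const_mul (-(cExp n p))).sub
      ((HasFDerivAt.fun_sum fun i _ => (hasFDerivAt_col x i).log (hs i).ne').const_mul (γ / 2))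
  have hF := hφ.exp
  have hL : Real.exp ((-(cExp n p)) * Real.log (Dfun x) - γ / 2 * ∑ i, Real.log (colNormSq x i)) •
      ((-(cExp n p)) • ((Dfun x)⁻¹ • DL x) - (γ / 2) • (∑ i, (colNormSq x i)⁻¹ • sL x i))
      = ∑ a, ∑ i, gfun γ x a i • mCoord a i := by
    ext E
    have hFx : Real.exp ((-(cExp n p)) * Real.log (Dfun x)
        - γ / 2 * ∑ i, Real.log (colNormSq x i)) = Ffun γ x := rfl
    simp only [ContinuousLinearMap.smul_apply, ContinuousLinearMap.sub_apply,
      ContinuousLinearMap.sum_apply, smul_eq_mul, mCoord_apply, DL_apply, sL_apply, hFx]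
    have e1 : (-(cExp n p)) * ((Dfun x)⁻¹ * ∑ a, ∑ i, 2 * (x * (Sfun x).adjugate) a i * E a i)
        = ∑ a, ∑ i, (-(2 * cExp n p)) * Kfun x a i * E a i := by
      rw [Finset.mul_sum, Finset.mul_sum]
      refine Finset.sum_congr rfl fun a _ => ?_
      rw [Finset.mul_sum, Finset.mul_sum]
      refine Finset.sum_congr rfl fun i _ => ?_
      rw [Kfun_apply, Matrix.mul_apply]
      ring
    have e2 : (γ / 2) * ∑ i, (colNormSq x i)⁻¹ * ∑ a, 2 * x a i * E a i
        = ∑ a, ∑ i, γ * (x a i / colNormSq x i) * E a i := by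
      rw [Finset.mul_sum, Finset.sum_comm]
      refine Finset.sum_congr rfl fun i _ => ?_
      rw [Finset.mul_sum, Finset.mul_sum]
      refine Finset.sum_congr rfl fun a _ => ?_
      rw [div_eq_mul_inv]
      ring
    rw [e1, e2, ← Finset.sum_sub_distrib, Finset.mul_sum]
    refine Finset.sum_congr rfl fun a _ => ?_
    rw [← Finset.sum_sub_distrib, Finset.mul_sum]
    refine Finset.sum_congr rfl fun i _ => ?_
    rw [gfun, hcoef]
    ring
  rw [hL] at hF
  exact hF



lemma isOpen_detne : IsOpen {y : Matrix (Fin n) (Fin p) ℝ | Dfun y ≠ 0} := by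
  have hc : Continuous (Dfun (n := n) (p := p)) :=
    continuous_iff_continuousAt.2 fun y => (hasFDerivAt_Dfun y).differentiableAt.continuousAt
  exact isOpen_compl_singleton.preimage hc

lemma isOpen_detpos : IsOpen {y : Matrix (Fin n) (Fin p) ℝ | 0 < Dfun y} := by
  have hc : Continuous (Dfun (n := n) (p := p)) :=
    continuous_iff_continuousAt.2 fun y => (hasFDerivAt_Dfun y).differentiableAt.continuousAt
  exact isOpen_lt continuous_const hc

lemma KS_eq (y : Matrix (Fin n) (Fin p) ℝ) (hy : Dfun y ≠ 0) (a : Fin n) (j : Fin p) :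
    ∑ k, Kfun y a k * Sfun y k j = y a j := by
  have h : Kfun y * Sfun y = y := by
    rw [Kfun, Matrix.mul_assoc, Matrix.nonsing_inv_mul _ (isUnit_iff_ne_zero.2 hy), Matrix.mul_one]
  conv_rhs => rw [← h]
  rw [Matrix.mul_apply]

lemma KD_eq (x : Matrix (Fin n) (Fin p) ℝ) (hdet : Dfun x ≠ 0) (a : Fin n) (i : Fin p) :
    fderiv ℝ (fun y => Kfun y a i) x (Matrix.single a i (1 : ℝ))
      = (1 - ∑ k, Kfun x a k * x a k) * (Sfun x)⁻¹ i i - (Kfun x a i) ^ 2 := by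
  set E : Matrix (Fin n) (Fin p) ℝ := Matrix.single a i (1 : ℝ) with hE
  set u : Fin p → ℝ := fun k => fderiv ℝ (fun y => Kfun y a k) x E with hu
  have hU : {y : Matrix (Fin n) (Fin p) ℝ | Dfun y ≠ 0} ∈ nhds x := isOpen_detne.mem_nhds hdet
  -- differentiate the identity Kfun * Sfun = id entrywise
  have hjE : ∀ j, (∑ k, (Kfun x a k * SLe x k j E + Sfun x k j * u k)) = E a j := by
    intro j
    have hsum : HasFDerivAt (fun y => ∑ k, Kfun y a k * Sfun y k j)
        (∑ k, (Kfun x a k • SLe x k j +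
          Sfun x k j • fderiv ℝ (fun y => Kfun y a k) x)) x :=
      HasFDerivAt.fun_sum fun k _ =>
        ((diffAt_Kfun x hdet a k).hasFDerivAt).mul (hasFDerivAt_Sfun_entry x k j)
    have heq : (fun y : Matrix (Fin n) (Fin p) ℝ => ∑ k, Kfun y a k * Sfun y k j)
        =ᶠ[nhds x] fun y => y a j :=
      Filter.eventually_of_mem hU fun y hy => KS_eq y hy a j
    have hfd : fderiv ℝ (fun y : Matrix (Fin n) (Fin p) ℝ => ∑ k, Kfun y a k * Sfun y k j) x
        = mCoord a j := by
      rw [heq.fderiv_eq, (hasFDerivAt_coord a j x).fderiv]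
    rw [hsum.fderiv] at hfd
    have := congrArg (fun L : Matrix (Fin n) (Fin p) ℝ →L[ℝ] ℝ => L E) hfd
    simpa [ContinuousLinearMap.sum_apply, hu] using this
  have hu2 : ∀ j, ∑ k, u k * Sfun x k j = E a j - ∑ k, Kfun x a k * SLe x k j E := by
    intro j
    rw [eq_sub_iff_add_eq, ← hjE j, Finset.sum_add_distrib, add_comm]
    congr 1
    exact Finset.sum_congr rfl fun k _ => mul_comm _ _
  have hsolve : u i = ∑ j, (E a j - ∑ k, Kfun x a k * SLe x k j E) * (Sfun x)⁻¹ j i := by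
    have h1 : u i = ∑ k, u k * (1 : Matrix (Fin p) (Fin p) ℝ) k i := by
      simp [Matrix.one_apply]
    rw [h1, ← Matrix.mul_nonsing_inv (Sfun x) (isUnit_iff_ne_zero.2 hdet)]
    simp_rw [Matrix.mul_apply, Finset.mul_sum]
    rw [Finset.sum_comm]
    refine Finset.sum_congr rfl fun j _ => ?_
    rw [← hu2 j, Finset.sum_mul]
    exact Finset.sum_congr rfl fun k _ => by ring
  rw [show (fderiv ℝ (fun y => Kfun y a i) x) E = u i from rfl, hsolve]
  -- now evaluate with E the standard basis matrix
  have hEapp : ∀ (b : Fin n) (j : Fin p), E b j = if b = a ∧ j = i then 1 else 0 := by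
    intro b j
    rw [hE]
    have hrfl : Matrix.single a i (1:ℝ) b j = if a = b ∧ i = j then 1 else 0 := rfl
    rw [hrfl]
    by_cases h : b = a ∧ j = i
    · rw [if_pos h, if_pos ⟨h.1.symm, h.2.symm⟩]
    · rw [if_neg h, if_neg fun hh => h ⟨hh.1.symm, hh.2.symm⟩]
  have hSLeE : ∀ k j, SLe x k j E
      = x a k * (if j = i then 1 else 0) + x a j * (if k = i then 1 else 0) := by
    intro k j
    rw [SLe_apply]
    rw [Finset.sum_eq_single a (fun b _ hb => by simp [hEapp, hb]) (by simp)]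
    simp [hEapp]
  have hKx : ∑ j, x a j * (Sfun x)⁻¹ j i = Kfun x a i := (Matrix.mul_apply).symm
  calc ∑ j, (E a j - ∑ k, Kfun x a k * SLe x k j E) * (Sfun x)⁻¹ j i
      = ∑ j, (((if j = i then 1 else 0) * (1 - ∑ k, Kfun x a k * x a k)) * (Sfun x)⁻¹ i i
          - (Kfun x a i * x a j) * (Sfun x)⁻¹ j i) := by
        refine Finset.sum_congr rfl fun j _ => ?_
        rw [hEapp a j]
        simp_rw [hSLeE]
        by_cases h2 : j = i
        · subst h2
          simp only [if_pos rfl, and_true, if_pos rfl, if_true]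
          have hks : ∑ k, Kfun x a k * (x a k * 1 + x a j * (if k = j then 1 else 0))
              = (∑ k, Kfun x a k * x a k) + Kfun x a j * x a j := by
            simp_rw [mul_add, mul_ite, mul_one, mul_zero]
            rw [Finset.sum_add_distrib,
              Finset.sum_ite_eq' Finset.univ j (fun k => Kfun x a k * x a j)]
            simp
          rw [hks]
          ring
        · simp only [if_neg h2, h2, and_false, if_false, mul_ite, mul_one, mul_zero, zero_mul,
            add_zero, zero_add, mul_add]
          rw [Finset.sum_ite_eq' Finset.univ i fun k => Kfun x a k * x a j]
          simp
    _ = (1 - ∑ k, Kfun x a k * x a k) * (Sfun x)⁻¹ i i - Kfun x a i ^ 2 := by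
        rw [Finset.sum_sub_distrib]
        congr 1
        · rw [← Finset.sum_mul]
          simp [Finset.sum_ite_eq']
        · simp_rw [mul_assoc]
          rw [← Finset.mul_sum, hKx]
          ring



lemma sum_mCoord_basis_eval (g : Fin n → Fin p → ℝ) (a : Fin n) (i : Fin p) :
    (∑ a', ∑ i', g a' i' • mCoord a' i') (Matrix.single a i (1 : ℝ)) = g a i := by
  have hE : ∀ (b : Fin n) (j : Fin p),
      Matrix.single a i (1 : ℝ) b j = if a = b ∧ i = j then 1 else 0 := fun _ _ => rfl
  simp only [ContinuousLinearMap.sum_apply, ContinuousLinearMap.smul_apply, mCoord_apply,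
    smul_eq_mul]
  rw [Finset.sum_eq_single_of_mem a (Finset.mem_univ a) ?h0]
  · rw [Finset.sum_eq_single_of_mem i (Finset.mem_univ i) ?h1]
    · rw [hE, if_pos ⟨rfl, rfl⟩, mul_one]
    · intro j _ hj
      rw [hE, if_neg fun hh => hj hh.2.symm, mul_zero]
  · intro b _ hb
    exact Finset.sum_eq_zero fun j _ => by
      rw [hE, if_neg fun hh => hb hh.1.symm, mul_zero]

lemma sL_basis_eval (x : Matrix (Fin n) (Fin p) ℝ) (a : Fin n) (i : Fin p) :
    sL x i (Matrix.single a i (1 : ℝ)) = 2 * x a i := by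
  have hE : ∀ (b : Fin n) (j : Fin p),
      Matrix.single a i (1 : ℝ) b j = if a = b ∧ i = j then 1 else 0 := fun _ _ => rfl
  rw [sL_apply]
  rw [Finset.sum_eq_single_of_mem a (Finset.mem_univ a) ?h0]
  · rw [hE, if_pos ⟨rfl, rfl⟩, mul_one]
  · intro b _ hb
    rw [hE, if_neg fun hh => hb hh.1.symm, mul_zero]

lemma diffAt_gfun (γ : ℝ) (x : Matrix (Fin n) (Fin p) ℝ) (hdet : 0 < Dfun x)
    (a : Fin n) (i : Fin p) : DifferentiableAt ℝ (fun y => gfun γ y a i) x := by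
  have hs0 : colNormSq x i ≠ 0 := (colNormSq_pos x hdet.ne' i).ne'
  have hF := (hasFDerivAt_F γ x hdet).differentiableAt
  have hK := diffAt_Kfun x hdet.ne' a i
  have hinv : DifferentiableAt ℝ (fun y => (colNormSq y i)⁻¹) x :=
    ((hasDerivAt_inv hs0).comp_hasFDerivAt x (hasFDerivAt_col x i)).differentiableAt
  exact hF.mul ((hK.const_mul _).sub
    (((hasFDerivAt_coord a i x).differentiableAt.mul hinv).const_mul γ))

lemma fderiv_gfun_eval (γ : ℝ) (x : Matrix (Fin n) (Fin p) ℝ) (hdet : 0 < Dfun x)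
    (a : Fin n) (i : Fin p) :
    fderiv ℝ (fun y => gfun γ y a i) x (Matrix.single a i (1 : ℝ))
      = Ffun γ x * ((hcoef γ x a i) ^ 2
          + (-(2 * cExp n p)) * fderiv ℝ (fun y => Kfun y a i) x (Matrix.single a i (1 : ℝ))
          - γ * ((colNormSq x i)⁻¹ - 2 * x a i ^ 2 * ((colNormSq x i) ^ 2)⁻¹)) := by
  have hs0 : colNormSq x i ≠ 0 := (colNormSq_pos x hdet.ne' i).ne'
  have hinv : HasFDerivAt (fun y => (colNormSq y i)⁻¹)
      ((-(colNormSq x i ^ 2)⁻¹) • sL x i) x :=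
    (hasDerivAt_inv hs0).comp_hasFDerivAt x (hasFDerivAt_col x i)
  have hdivf := (hasFDerivAt_coord a i x).mul hinv
  have hK : HasFDerivAt (fun y => Kfun y a i) (fderiv ℝ (fun y => Kfun y a i) x) x :=
    (diffAt_Kfun x hdet.ne' a i).hasFDerivAt
  have hh : HasFDerivAt (fun y => hcoef γ y a i)
      ((-(2 * cExp n p)) • fderiv ℝ (fun y => Kfun y a i) x -
        γ • (x a i • ((-(colNormSq x i ^ 2)⁻¹) • sL x i) + (colNormSq x i)⁻¹ • mCoord a i)) x :=
    (hK.const_mul _).sub (hdivf.const_mul γ)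
  have hg := (hasFDerivAt_F γ x hdet).fun_mul hh
  have hfd := hg.fderiv
  have hfun : (fun y => Ffun γ y * hcoef γ y a i) = fun y => gfun γ y a i := rfl
  rw [hfun] at hfd
  have := congrArg (fun L : Matrix (Fin n) (Fin p) ℝ →L[ℝ] ℝ =>
    L (Matrix.single a i (1 : ℝ))) hfd
  simp only [ContinuousLinearMap.add_apply, ContinuousLinearMap.smul_apply,
    ContinuousLinearMap.sub_apply, smul_eq_mul, mCoord_apply] at this
  rw [sum_mCoord_basis_eval, sL_basis_eval] at this
  rw [this]
  have hEaa : Matrix.single a i (1 : ℝ) a i = 1 := by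
    rw [show Matrix.single a i (1:ℝ) a i = if a = a ∧ i = i then 1 else 0 from rfl,
      if_pos ⟨rfl, rfl⟩]
  rw [hEaa, gfun, hcoef]
  ring

lemma matLap_eq (γ : ℝ) (M : Matrix (Fin n) (Fin p) ℝ) (hdet : 0 < Dfun M) :
    matLap (piMSVS2 n p (fun _ => γ)) M
      = ∑ a, ∑ i, fderiv ℝ (fun y => gfun γ y a i) M (Matrix.single a i (1 : ℝ)) := by
  have hU : {y : Matrix (Fin n) (Fin p) ℝ | 0 < Dfun y} ∈ nhds M := isOpen_detpos.mem_nhds hdet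
  have hev : piMSVS2 n p (fun _ => γ) =ᶠ[nhds M] Ffun γ :=
    Filter.eventually_of_mem hU fun y hy => piMSVS2_eq γ y hy
  have hev2 : fderiv ℝ (Ffun γ) =ᶠ[nhds M]
      fun y => ∑ a, ∑ i, gfun γ y a i • mCoord a i :=
    Filter.eventually_of_mem hU fun y hy => (hasFDerivAt_F γ y hy).fderiv
  have hd2 : fderiv ℝ (fderiv ℝ (piMSVS2 n p (fun _ => γ))) M
      = ∑ a, ∑ i, (fderiv ℝ (fun y => gfun γ y a i) M).smulRight (mCoord a i) := by
    rw [(hev.fderiv).fderiv_eq, hev2.fderiv_eq]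
    rw [fderiv_fun_sum fun a _ => DifferentiableAt.fun_sum fun i _ =>
      (diffAt_gfun γ M hdet a i).smul_const (mCoord a i)]
    refine Finset.sum_congr rfl fun a _ => ?_
    rw [fderiv_fun_sum fun i _ => (diffAt_gfun γ M hdet a i).smul_const (mCoord a i)]
    exact Finset.sum_congr rfl fun i _ => fderiv_smul_const (diffAt_gfun γ M hdet a i) _
  rw [matLap]
  refine Finset.sum_congr rfl fun a _ => Finset.sum_congr rfl fun i _ => ?_
  rw [iteratedFDeriv_two_apply, hd2]
  simp only [Matrix.cons_val_zero, Matrix.cons_val_one, Matrix.head_cons,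
    ContinuousLinearMap.sum_apply, ContinuousLinearMap.smulRight_apply, smul_eq_mul]
  have hE : ∀ (b : Fin n) (j : Fin p),
      Matrix.single a i (1:ℝ) b j = if a = b ∧ i = j then 1 else 0 := fun _ _ => rfl
  simp only [ContinuousLinearMap.smul_apply, mCoord_apply, smul_eq_mul]
  rw [Finset.sum_eq_single_of_mem a (Finset.mem_univ a) ?h0]
  · rw [Finset.sum_eq_single_of_mem i (Finset.mem_univ i) ?h1]
    · rw [hE, if_pos ⟨rfl, rfl⟩, mul_one]
    · intro j _ hj
      rw [hE, if_neg fun hh => hj hh.2.symm, mul_zero]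
  · intro b _ hb
    exact Finset.sum_eq_zero fun j _ => by
      rw [hE, if_neg fun hh => hb hh.1.symm, mul_zero]


lemma Sfun_transpose (x : Matrix (Fin n) (Fin p) ℝ) : (Sfun x)ᵀ = Sfun x := by
  ext i j
  rw [Matrix.transpose_apply]
  exact Sfun_symm x j i

lemma Si_symm (x : Matrix (Fin n) (Fin p) ℝ) (j i : Fin p) :
    (Sfun x)⁻¹ j i = (Sfun x)⁻¹ i j := by
  have h : ((Sfun x)⁻¹)ᵀ = (Sfun x)⁻¹ := by
    rw [Matrix.transpose_nonsing_inv, Sfun_transpose]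
  conv_lhs => rw [← h]
  rw [Matrix.transpose_apply]

lemma Kfun_mul_apply (x : Matrix (Fin n) (Fin p) ℝ) (a : Fin n) (i : Fin p) :
    Kfun x a i = ∑ j, x a j * (Sfun x)⁻¹ j i := Matrix.mul_apply

lemma sum_KM (x : Matrix (Fin n) (Fin p) ℝ) (hdet : Dfun x ≠ 0) (i : Fin p) :
    ∑ a, Kfun x a i * x a i = 1 := by
  have h1 : ∑ a, Kfun x a i * x a i = ∑ j, (Sfun x)⁻¹ j i * Sfun x j i := by
    simp_rw [Kfun_mul_apply, Finset.sum_mul]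
    rw [Finset.sum_comm]
    refine Finset.sum_congr rfl fun j _ => ?_
    rw [Sfun_apply, Finset.mul_sum]
    exact Finset.sum_congr rfl fun a _ => by ring
  rw [h1]
  have h2 : ∑ j, (Sfun x)⁻¹ j i * Sfun x j i = ((Sfun x) * (Sfun x)⁻¹) i i := by
    rw [Matrix.mul_apply]
    exact Finset.sum_congr rfl fun j _ => by rw [Sfun_symm x j i]; ring
  rw [h2, Matrix.mul_nonsing_inv _ (isUnit_iff_ne_zero.2 hdet), Matrix.one_apply_eq]

lemma sum_K2 (x : Matrix (Fin n) (Fin p) ℝ) (hdet : Dfun x ≠ 0) (i : Fin p) :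
    ∑ a, Kfun x a i ^ 2 = (Sfun x)⁻¹ i i := by
  have hL : ∑ a, Kfun x a i ^ 2
      = ∑ a, ∑ j, ∑ k, (x a j * (Sfun x)⁻¹ j i) * (x a k * (Sfun x)⁻¹ k i) := by
    refine Finset.sum_congr rfl fun a _ => ?_
    rw [pow_two, Kfun_mul_apply, Finset.sum_mul_sum]
  have hR : ∀ k, (Sfun x)⁻¹ k i * ∑ j, Sfun x k j * (Sfun x)⁻¹ j i
      = ∑ j, ∑ a, (x a j * (Sfun x)⁻¹ j i) * (x a k * (Sfun x)⁻¹ k i) := by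
    intro k
    rw [Finset.mul_sum]
    refine Finset.sum_congr rfl fun j _ => ?_
    rw [Sfun_apply, Finset.sum_mul, Finset.mul_sum]
    refine Finset.sum_congr rfl fun a _ => by ring
  have h1 : ∑ a, Kfun x a i ^ 2
      = ∑ k, (Sfun x)⁻¹ k i * ∑ j, Sfun x k j * (Sfun x)⁻¹ j i := by
    rw [hL]
    simp_rw [hR]
    rw [Finset.sum_congr rfl fun a _ => Finset.sum_comm, Finset.sum_comm]
    exact Finset.sum_congr rfl fun k _ => Finset.sum_comm
  rw [h1]
  have h2 : ∀ k, (∑ j, Sfun x k j * (Sfun x)⁻¹ j i) = ((Sfun x) * (Sfun x)⁻¹) k i :=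
    fun k => (Matrix.mul_apply).symm
  simp_rw [h2, Matrix.mul_nonsing_inv _ (isUnit_iff_ne_zero.2 hdet), Matrix.one_apply]
  simp



/-- the Laplacian of π_MSVS2 (with γ_1 = ⋯ = γ_p = γ) equals
γ(γ + n − 2p) (Σ_i ‖M_{·i}‖^{−2}) π_MSVS2(M) at every M with det(MᵀM) > 0;
in particular π_MSVS2 is superharmonic there when γ(γ + n − 2p) ≤ 0. -/
theorem stmt15 (n p : ℕ) (hn : p + 2 ≤ n) (γ : ℝ) (hγ0 : 0 ≤ γ)
    (M : Matrix (Fin n) (Fin p) ℝ) (hdet : 0 < (Mᵀ * M).det) :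
    matLap (piMSVS2 n p (fun _ => γ)) M =
      γ * (γ + (n : ℝ) - 2 * p) * (∑ i, (colNormSq M i)⁻¹) *
        piMSVS2 n p (fun _ => γ) M ∧
    (γ * (γ + (n : ℝ) - 2 * p) ≤ 0 → matLap (piMSVS2 n p (fun _ => γ)) M ≤ 0) := by
  have hdet' : 0 < Dfun M := hdet
  have hs : ∀ i, 0 < colNormSq M i := colNormSq_pos M hdet'.ne'
  have hsum_i : ∀ i : Fin p, ∑ a, fderiv ℝ (fun y => gfun γ y a i) M
      (Matrix.single a i (1 : ℝ))
      = γ * (γ + (n : ℝ) - 2 * p) * (colNormSq M i)⁻¹ * Ffun γ M := by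
    intro i
    have hsi := hs i
    have hterm : ∀ a, fderiv ℝ (fun y => gfun γ y a i) M (Matrix.single a i (1 : ℝ))
        = Ffun γ M * ((4 * cExp n p ^ 2 + 2 * cExp n p) * Kfun M a i ^ 2
          + (4 * cExp n p * γ * (colNormSq M i)⁻¹) * (Kfun M a i * M a i)
          + ((γ ^ 2 + 2 * γ) * ((colNormSq M i) ^ 2)⁻¹) * M a i ^ 2
          + ((-(2 * cExp n p)) * (Sfun M)⁻¹ i i - γ * (colNormSq M i)⁻¹)
          + (2 * cExp n p * (Sfun M)⁻¹ i i) * (∑ k, Kfun M a k * M a k)) := by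
      intro a
      rw [fderiv_gfun_eval γ M hdet' a i, KD_eq M hdet'.ne' a i]
      simp only [hcoef]
      ring
    have hq : ∑ a : Fin n, ∑ k, Kfun M a k * M a k = (p : ℝ) := by
      rw [Finset.sum_comm, Finset.sum_congr rfl fun k _ => sum_KM M hdet'.ne' k]
      simp
    calc ∑ a, fderiv ℝ (fun y => gfun γ y a i) M (Matrix.single a i (1 : ℝ))
        = Ffun γ M * ∑ a, ((4 * cExp n p ^ 2 + 2 * cExp n p) * Kfun M a i ^ 2
          + (4 * cExp n p * γ * (colNormSq M i)⁻¹) * (Kfun M a i * M a i)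
          + ((γ ^ 2 + 2 * γ) * ((colNormSq M i) ^ 2)⁻¹) * M a i ^ 2
          + ((-(2 * cExp n p)) * (Sfun M)⁻¹ i i - γ * (colNormSq M i)⁻¹)
          + (2 * cExp n p * (Sfun M)⁻¹ i i) * (∑ k, Kfun M a k * M a k)) := by
          rw [Finset.sum_congr rfl fun a _ => hterm a, ← Finset.mul_sum]
      _ = Ffun γ M * ((4 * cExp n p ^ 2 + 2 * cExp n p) * (∑ a, Kfun M a i ^ 2)
          + (4 * cExp n p * γ * (colNormSq M i)⁻¹) * (∑ a, Kfun M a i * M a i)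
          + ((γ ^ 2 + 2 * γ) * ((colNormSq M i) ^ 2)⁻¹) * (∑ a, M a i ^ 2)
          + (n : ℝ) * ((-(2 * cExp n p)) * (Sfun M)⁻¹ i i - γ * (colNormSq M i)⁻¹)
          + (2 * cExp n p * (Sfun M)⁻¹ i i) * (∑ a : Fin n, ∑ k, Kfun M a k * M a k)) := by
          congr 1
          rw [Finset.sum_add_distrib, Finset.sum_add_distrib, Finset.sum_add_distrib,
            Finset.sum_add_distrib, ← Finset.mul_sum, ← Finset.mul_sum, ← Finset.mul_sum,
            ← Finset.mul_sum, Finset.sum_const, Finset.card_univ, Fintype.card_fin,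
            nsmul_eq_mul]
      _ = Ffun γ M * ((4 * cExp n p ^ 2 + 2 * cExp n p) * (Sfun M)⁻¹ i i
          + (4 * cExp n p * γ * (colNormSq M i)⁻¹) * 1
          + ((γ ^ 2 + 2 * γ) * ((colNormSq M i) ^ 2)⁻¹) * colNormSq M i
          + (n : ℝ) * ((-(2 * cExp n p)) * (Sfun M)⁻¹ i i - γ * (colNormSq M i)⁻¹)
          + (2 * cExp n p * (Sfun M)⁻¹ i i) * (p : ℝ)) := by
          rw [sum_K2 M hdet'.ne' i, sum_KM M hdet'.ne' i, hq,
            show (∑ a, M a i ^ 2) = colNormSq M i from rfl]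
      _ = γ * (γ + (n : ℝ) - 2 * p) * (colNormSq M i)⁻¹ * Ffun γ M := by
          simp only [cExp]
          field_simp
          ring
  have key : matLap (piMSVS2 n p (fun _ => γ)) M =
      γ * (γ + (n : ℝ) - 2 * p) * (∑ i, (colNormSq M i)⁻¹) * piMSVS2 n p (fun _ => γ) M := by
    rw [matLap_eq γ M hdet', Finset.sum_comm, Finset.sum_congr rfl fun i _ => hsum_i i,
      piMSVS2_eq γ M hdet']
    rw [← Finset.sum_mul, ← Finset.mul_sum]
  refine ⟨key, fun hineq => ?_⟩
  rw [key]
  have hπ : 0 ≤ piMSVS2 n p (fun _ => γ) M := by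
    rw [piMSVS2]
    refine mul_nonneg ?_ (Finset.prod_nonneg fun i _ => Real.rpow_nonneg (Real.sqrt_nonneg _) _)
    rw [piSVS]
    exact Real.rpow_nonneg hdet.le _
  have hSig : 0 ≤ ∑ i, (colNormSq M i)⁻¹ :=
    Finset.sum_nonneg fun i _ => inv_nonneg.2 (hs i).le
  rw [mul_assoc (γ * (γ + (n : ℝ) - 2 * p))]
  exact mul_nonpos_iff.2 (Or.inr ⟨hineq, mul_nonneg hSig hπ⟩)

end DoubleShrinkage
end
end
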